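/- Let 0 < q < 1 and α > 0 be real, w complex with |w| < 1, d an odd positive integer, χ : ℤ → ℂ with period d, x ≥ 0 real, and n a nonnegative integer. Then (1+q) Σ_{m=0}^∞ (-1)^m w^m χ(m) [x+m]_{q^α}^n = ([d]_{q^α}^n / [d]_{-q}) · Σ_{a=0}^{d-1} (-1)^a w^a χ(a) · (1+q^d) Σ_{m=0}^∞ (-1)^m w^{dm} [(x+a)/d + m]_{q^{dα}}^n, where [d]_{-q} = (1 + q^d)/(1 + q). -/

import Mathlib

/-- The weighted q-bracket `[y]_{q^α} = (1 - q^{αy})/(1 - q^α)`. -/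
noncomputable def qbr (q α y : ℝ) : ℝ := (1 - q ^ (α * y)) / (1 - q ^ α)

section Aux

variable {q α : ℝ}

lemma qbr_key (hq0 : 0 < q) (hq1 : q < 1) (hα : 0 < α) {d : ℕ} (hd0 : 0 < d)
    (x : ℝ) (a m : ℕ) :
    qbr q α d * ((1 - q ^ ((d : ℝ) * α * ((x + a) / d + m))) / (1 - q ^ ((d : ℝ) * α)))
      = qbr q α (x + (a + d * m : ℕ)) := by
  have hdR : (0:ℝ) < (d:ℝ) := by exact_mod_cast hd0
  have h1 : (0:ℝ) < 1 - q ^ α :=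
    sub_pos.mpr (Real.rpow_lt_one hq0.le hq1 hα)
  have h2 : (0:ℝ) < 1 - q ^ ((d:ℝ) * α) :=
    sub_pos.mpr (Real.rpow_lt_one hq0.le hq1 (by positivity))
  have hexp : (d:ℝ) * α * ((x + a) / d + m) = α * (x + ((a + d * m : ℕ) : ℝ)) := by
    push_cast
    field_simp
    ring
  have hdα : α * (d:ℝ) = (d:ℝ) * α := mul_comm _ _
  unfold qbr
  rw [hexp, hdα]
  field_simp

end Aux

/-- Distribution (multiplication) theorem for the modified Dirichlet-type twisted
q-Euler polynomials with weight α; here `[d]_{-q} = (1+q^d)/(1+q)`. -/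
theorem twisted_qEuler_distribution (q α : ℝ) (hq0 : 0 < q) (hq1 : q < 1) (hα : 0 < α)
    (w : ℂ) (hw : ‖w‖ < 1) (d : ℕ) (hd : Odd d) (hd0 : 0 < d)
    (χ : ℤ → ℂ) (hχ : ∀ j : ℤ, χ (j + d) = χ j) (x : ℝ) (hx : 0 ≤ x) (n : ℕ) :
    (1 + (q : ℂ)) *
        ∑' m : ℕ, (-1 : ℂ) ^ m * w ^ m * χ m * ((qbr q α (x + m) : ℝ) : ℂ) ^ n
      = (((qbr q α d : ℝ) : ℂ) ^ n / (((1 + q ^ d) / (1 + q) : ℝ) : ℂ)) *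
          ∑ a ∈ Finset.range d, (-1 : ℂ) ^ a * w ^ a * χ a *
            ((1 + ((q ^ d : ℝ) : ℂ)) *
              ∑' m : ℕ, (-1 : ℂ) ^ m * w ^ (d * m) *
                (((1 - q ^ ((d : ℝ) * α * ((x + a) / d + m))) / (1 - q ^ ((d : ℝ) * α)) : ℝ) : ℂ) ^ n) := by
  haveI : NeZero d := ⟨hd0.ne'⟩
  set f : ℕ → ℂ := fun k => (-1 : ℂ) ^ k * w ^ k * χ k * ((qbr q α (x + k) : ℝ) : ℂ) ^ n with hf
  -- periodicity on ℕ
  have hχnat : ∀ a m : ℕ, χ ((a + d * m : ℕ) : ℤ) = χ a := by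
    intro a m
    induction m with
    | zero => simp
    | succ m ih =>
      have : ((a + d * (m+1) : ℕ) : ℤ) = ((a + d * m : ℕ) : ℤ) + d := by push_cast; ring
      rw [this, hχ, ih]
  -- bound on χ
  have hχbound : ∀ k : ℕ, ‖χ k‖ ≤ ∑ a ∈ Finset.range d, ‖χ a‖ := by
    intro k
    have hk : k = k % d + d * (k / d) := (Nat.mod_add_div k d).symm
    have : χ (k : ℤ) = χ ((k % d : ℕ) : ℤ) := by
      conv_lhs => rw [hk]
      exact hχnat _ _
    rw [this]
    exact Finset.single_le_sum (f := fun a : ℕ => ‖χ (a : ℤ)‖) (fun i _ => norm_nonneg _)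
      (Finset.mem_range.mpr (Nat.mod_lt k hd0))
  have h1 : (0:ℝ) < 1 - q ^ α := sub_pos.mpr (Real.rpow_lt_one hq0.le hq1 hα)
  -- bound on qbr
  have hqbr : ∀ k : ℕ, |qbr q α (x + k)| ≤ 1 / (1 - q ^ α) := by
    intro k
    have ht : (0:ℝ) ≤ α * (x + k) := by positivity
    have hle : q ^ (α * (x + k)) ≤ 1 := Real.rpow_le_one hq0.le hq1.le ht
    have hpos : (0:ℝ) < q ^ (α * (x + k)) := Real.rpow_pos_of_pos hq0 _
    have hnn : (0:ℝ) ≤ qbr q α (x + k) := div_nonneg (by linarith) h1.le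
    rw [abs_of_nonneg hnn]
    unfold qbr
    gcongr
    linarith
  -- summability
  have hsum : Summable f := by
    apply Summable.of_norm_bounded
      (g := fun k => ((∑ a ∈ Finset.range d, ‖χ a‖) * (1 / (1 - q ^ α)) ^ n) * ‖w‖ ^ k)
      (((summable_geometric_of_lt_one (norm_nonneg w) hw)).mul_left _)
    intro k
    rw [hf]
    simp only [norm_mul, norm_pow, norm_neg, norm_one, one_pow, one_mul, Complex.norm_real,
      Real.norm_eq_abs]
    calc ‖w‖ ^ k * ‖χ k‖ * |qbr q α (x + k)| ^ n
        ≤ ‖w‖ ^ k * (∑ a ∈ Finset.range d, ‖χ a‖) * (1 / (1 - q ^ α)) ^ n := by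
          apply mul_le_mul
          · exact mul_le_mul_of_nonneg_left (hχbound k) (by positivity)
          · exact pow_le_pow_left₀ (abs_nonneg _) (hqbr k) n
          · positivity
          · positivity
      _ = (∑ a ∈ Finset.range d, ‖χ a‖) * (1 / (1 - q ^ α)) ^ n * ‖w‖ ^ k := by ring
  -- reindex tsum
  set e : Fin d × ℕ ≃ ℕ :=
    (Equiv.prodComm (Fin d) ℕ).trans (Nat.divModEquiv d).symm with he
  have heval : ∀ p : Fin d × ℕ, e p = (p.1 : ℕ) + d * p.2 := by
    intro p
    simp [he, Nat.divModEquiv, Equiv.prodComm, mul_comm, add_comm]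
  have hsplit : ∑' k, f k = ∑ a ∈ Finset.range d, ∑' m : ℕ, f (a + d * m) := by
    have h1' : Summable (f ∘ e) := e.summable_iff.mpr hsum
    calc ∑' k, f k = ∑' p : Fin d × ℕ, f (e p) := (e.tsum_eq f).symm
      _ = ∑' (a : Fin d), ∑' m : ℕ, f (e (a, m)) := Summable.tsum_prod h1'
      _ = ∑ a : Fin d, ∑' m : ℕ, f ((a : ℕ) + d * m) := by
          rw [tsum_fintype]
          exact Finset.sum_congr rfl (fun a _ => by simp only [heval])
      _ = ∑ a ∈ Finset.range d, ∑' m : ℕ, f (a + d * m) :=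
          Fin.sum_univ_eq_sum_range (fun a => ∑' m : ℕ, f (a + d * m)) d
  -- values
  have hq1C : (1 + (q:ℂ)) ≠ 0 := by
    have h : ((1 + q : ℝ) : ℂ) ≠ 0 := Complex.ofReal_ne_zero.mpr (by positivity)
    simpa using h
  have hqdC : (1 + ((q ^ d : ℝ) : ℂ)) ≠ 0 := by
    have : (0:ℝ) < 1 + q ^ d := by positivity
    simpa using Complex.ofReal_ne_zero.mpr this.ne'
  -- per-a identity
  have hterm : ∀ a ∈ Finset.range d,
      (((qbr q α d : ℝ) : ℂ) ^ n / (((1 + q ^ d) / (1 + q) : ℝ) : ℂ)) *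
        ((-1 : ℂ) ^ a * w ^ a * χ a *
          ((1 + ((q ^ d : ℝ) : ℂ)) *
            ∑' m : ℕ, (-1 : ℂ) ^ m * w ^ (d * m) *
              (((1 - q ^ ((d : ℝ) * α * ((x + a) / d + m))) / (1 - q ^ ((d : ℝ) * α)) : ℝ) : ℂ) ^ n))
      = (1 + (q:ℂ)) * ∑' m : ℕ, f (a + d * m) := by
    intro a _
    have hpt : ∀ m : ℕ, f (a + d * m)
        = ((-1 : ℂ) ^ a * w ^ a * χ a * ((qbr q α d : ℝ) : ℂ) ^ n) *
          ((-1 : ℂ) ^ m * w ^ (d * m) *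
            (((1 - q ^ ((d : ℝ) * α * ((x + a) / d + m))) / (1 - q ^ ((d : ℝ) * α)) : ℝ) : ℂ) ^ n) := by
      intro m
      simp only [hf]
      have hsgn : ((-1 : ℂ)) ^ (a + d * m) = (-1) ^ a * (-1) ^ m := by
        rw [pow_add, pow_mul, hd.neg_one_pow]
      have hwp : w ^ (a + d * m) = w ^ a * w ^ (d * m) := pow_add w a (d * m)
      have hbr : ((qbr q α (x + ((a + d * m : ℕ) : ℝ)) : ℝ) : ℂ)
          = ((qbr q α d : ℝ) : ℂ) *
            (((1 - q ^ ((d : ℝ) * α * ((x + a) / d + m))) / (1 - q ^ ((d : ℝ) * α)) : ℝ) : ℂ) := by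
        rw [← Complex.ofReal_mul, qbr_key hq0 hq1 hα hd0 x a m]
      rw [hsgn, hwp, hχnat a m, hbr, mul_pow]
      ring
    have hqdC' : (1:ℂ) + (q:ℂ) ^ d ≠ 0 := by push_cast at hqdC; exact hqdC
    have hcc : (1 + ((q ^ d : ℝ) : ℂ)) / (((1 + q ^ d) / (1 + q) : ℝ) : ℂ) = 1 + (q:ℂ) := by
      push_cast
      rw [div_div_eq_mul_div, mul_comm, mul_div_assoc, div_self hqdC', mul_one]
    rw [tsum_congr hpt, tsum_mul_left, ← hcc]
    ring
  rw [hsplit, Finset.mul_sum, Finset.mul_sum]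
  exact Finset.sum_congr rfl (fun a ha => (hterm a ha).symm)
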